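/- If f ∈ W(L_∞, ℓ¹^{v_d})(ℝ^d), i.e. ∑_{k∈ℤ^d} (sup_{x∈[0,1)^d} |f(x+k)|)·(1+‖k‖_∞)^d < ∞, then f belongs to the homogeneous Herz space E_∞(ℝ^d) and ‖f‖_{E_∞} ≤ C‖f‖_{W(L_∞,ℓ¹^{v_d})}. -/

import Mathlib

open MeasureTheory ENNReal Real

/-- The annulus `P_k = {x ∈ ℝ^d : 2^{k-1} π ≤ ‖x‖_∞ < 2^k π}` (sup norm on `ℝ^d`). -/
def herzAnnulus (d : ℕ) (k : ℤ) : Set (Fin d → ℝ) :=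
  {x | (2 : ℝ) ^ (k - 1) * π ≤ ‖x‖ ∧ ‖x‖ < (2 : ℝ) ^ k * π}

/-- The homogeneous Herz norm `‖f‖_{E_∞} = ∑_{k∈ℤ} 2^{kd} sup_{P_k} |f|`. -/
noncomputable def herzNorm (d : ℕ) (f : (Fin d → ℝ) → ℂ) : ℝ≥0∞ :=
  ∑' k : ℤ, (2 : ℝ≥0∞) ^ (k * (d : ℤ)) * ⨆ x ∈ herzAnnulus d k, (‖f x‖₊ : ℝ≥0∞)

/-- The weighted Wiener amalgam norm
`‖f‖_{W(L_∞,ℓ¹^{v_d})} = ∑_{k∈ℤ^d} (sup_{x∈[0,1)^d} |f(x+k)|) (1+‖k‖_∞)^d`. -/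
noncomputable def wienerAmalgamNorm (d : ℕ) (f : (Fin d → ℝ) → ℂ) : ℝ≥0∞ :=
  ∑' k : Fin d → ℤ,
    (⨆ x ∈ Set.pi Set.univ (fun _ : Fin d => Set.Ico (0 : ℝ) 1),
        (‖f (x + fun i => (k i : ℝ))‖₊ : ℝ≥0∞)) *
      ENNReal.ofReal ((1 + ‖(fun i => (k i : ℝ) : Fin d → ℝ)‖) ^ d)

/-- Geometric sum bound: `∑_{j≥0} 2^{(m-j)d} ≤ 2·2^{md}` for `d ≥ 1`. -/
lemma herz_geom_sum_le (d : ℕ) (hd : 1 ≤ d) (m : ℕ) :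
    ∑' j : ℕ, (2 : ℝ≥0∞) ^ (((m : ℤ) - j) * d) ≤ 2 * (2 : ℝ≥0∞) ^ ((m : ℤ) * d) := by
  have h2 : (2 : ℝ≥0∞) ≠ 0 := by norm_num
  have h2' : (2 : ℝ≥0∞) ≠ ∞ := by norm_num
  have key : ∀ j : ℕ, (2 : ℝ≥0∞) ^ (((m : ℤ) - j) * d)
      = (2 : ℝ≥0∞) ^ ((m : ℤ) * d) * (((2 : ℝ≥0∞) ^ d)⁻¹) ^ j := by
    intro j
    rw [sub_mul, ENNReal.zpow_sub h2 h2']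
    congr 1
    have hc : ((j : ℤ) * d) = ((j * d : ℕ) : ℤ) := by push_cast; ring
    rw [hc, zpow_natCast, mul_comm j d, pow_mul, ENNReal.inv_pow]
  simp only [key]
  rw [ENNReal.tsum_mul_left, ENNReal.tsum_geometric, mul_comm]
  gcongr
  have hle : ((2 : ℝ≥0∞) ^ d)⁻¹ ≤ 2⁻¹ := by
    apply ENNReal.inv_le_inv'
    calc (2 : ℝ≥0∞) = 2 ^ 1 := (pow_one _).symm
      _ ≤ 2 ^ d := by gcongr; · norm_num
  calc (1 - ((2 : ℝ≥0∞) ^ d)⁻¹)⁻¹ ≤ (1 - (2 : ℝ≥0∞)⁻¹)⁻¹ := by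
        apply ENNReal.inv_le_inv'
        exact tsub_le_tsub_left hle 1
    _ = 2 := by rw [ENNReal.one_sub_inv_two, inv_inv]

/-- Counting lemma: `∑_{k : 2^k ≤ a} 2^{kd} ≤ 2 a^d` for `a ≥ 1`, `d ≥ 1`. -/
lemma herz_count_le (d : ℕ) (hd : 1 ≤ d) (a : ℝ) (ha : 1 ≤ a) :
    ∑' k : ℤ, (if (2 : ℝ) ^ k ≤ a then (2 : ℝ≥0∞) ^ (k * (d : ℤ)) else 0)
      ≤ 2 * ENNReal.ofReal (a ^ d) := by
  have ha0 : (0 : ℝ) < a := lt_of_lt_of_le one_pos ha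
  have hiff : ∀ k : ℤ, (2 : ℝ) ^ k ≤ a ↔ k ≤ Int.log 2 a := by
    intro k
    have := Int.zpow_le_iff_le_log (b := 2) (R := ℝ) (by norm_num) (x := k) ha0
    simpa using this
  have hlog0 : 0 ≤ Int.log 2 a := by
    rw [← hiff 0]; simpa using ha
  set m : ℕ := (Int.log 2 a).toNat with hm
  have hmz : (m : ℤ) = Int.log 2 a := Int.toNat_of_nonneg hlog0
  have hiff' : ∀ k : ℤ, (2 : ℝ) ^ k ≤ a ↔ k ≤ (m : ℤ) := by
    intro k; rw [hmz]; exact hiff k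
  have h2m : (2 : ℝ) ^ m ≤ a := by
    have := (hiff' (m : ℤ)).mpr le_rfl
    rwa [zpow_natCast] at this
  -- reindex the sum over `{k ≤ m}` by `ℕ`
  have hinj : Function.Injective (fun j : ℕ => (m : ℤ) - j) := by
    intro a b h; simpa using h
  have hsupp : Function.support
      (fun k : ℤ => if (2 : ℝ) ^ k ≤ a then (2 : ℝ≥0∞) ^ (k * (d : ℤ)) else 0)
        ⊆ Set.range (fun j : ℕ => (m : ℤ) - j) := by
    intro k hk
    by_cases hc : (2 : ℝ) ^ k ≤ a
    · have hk' : k ≤ (m : ℤ) := (hiff' k).mp hc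
      exact ⟨((m : ℤ) - k).toNat, by simp [Int.toNat_of_nonneg (by omega : (0:ℤ) ≤ (m:ℤ) - k)]⟩
    · simp [hc] at hk
  rw [← hinj.tsum_eq hsupp]
  have hterm : ∀ j : ℕ,
      (if (2 : ℝ) ^ ((m : ℤ) - j) ≤ a then (2 : ℝ≥0∞) ^ (((m : ℤ) - j) * d) else 0)
        = (2 : ℝ≥0∞) ^ (((m : ℤ) - j) * d) := by
    intro j
    rw [if_pos]
    exact (hiff' _).mpr (by omega)
  calc ∑' j : ℕ, (if (2 : ℝ) ^ ((m : ℤ) - j) ≤ a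
          then (2 : ℝ≥0∞) ^ (((m : ℤ) - j) * d) else 0)
      = ∑' j : ℕ, (2 : ℝ≥0∞) ^ (((m : ℤ) - j) * d) := by simp only [hterm]
    _ ≤ 2 * (2 : ℝ≥0∞) ^ ((m : ℤ) * d) := herz_geom_sum_le d hd m
    _ ≤ 2 * ENNReal.ofReal (a ^ d) := by
        gcongr
        have : ((m : ℤ) * d) = ((m * d : ℕ) : ℤ) := by push_cast; ring
        rw [this, zpow_natCast, pow_mul]
        calc ((2 : ℝ≥0∞) ^ m) ^ d ≤ (ENNReal.ofReal a) ^ d := by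
              gcongr
              have : (2 : ℝ≥0∞) ^ m = ENNReal.ofReal ((2 : ℝ) ^ m) := by
                rw [ENNReal.ofReal_pow (by norm_num)]; norm_num
              rw [this]
              exact ENNReal.ofReal_le_ofReal h2m
          _ = ENNReal.ofReal (a ^ d) := (ENNReal.ofReal_pow ha0.le d).symm

/-- `‖x‖ ≤ ‖⌊x⌋‖ + 1` for the sup norm on `ℝ^d`. -/
lemma herz_norm_le_floor (d : ℕ) (x : Fin d → ℝ) :
    ‖x‖ ≤ ‖(fun i => ((⌊x i⌋ : ℤ) : ℝ) : Fin d → ℝ)‖ + 1 := by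
  have h0 : (0:ℝ) ≤ ‖(fun i => ((⌊x i⌋ : ℤ) : ℝ) : Fin d → ℝ)‖ + 1 := by positivity
  rw [pi_norm_le_iff_of_nonneg h0]
  intro i
  have h1 : ‖((⌊x i⌋ : ℤ) : ℝ)‖ ≤ ‖(fun i => ((⌊x i⌋ : ℤ) : ℝ) : Fin d → ℝ)‖ :=
    norm_le_pi_norm (fun j : Fin d => ((⌊x j⌋ : ℤ) : ℝ)) i
  have h2 : x i = ((⌊x i⌋ : ℤ) : ℝ) + Int.fract (x i) := (Int.floor_add_fract (x i)).symm
  have h3 : |Int.fract (x i)| ≤ 1 := by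
    rw [abs_of_nonneg (Int.fract_nonneg _)]
    exact (Int.fract_lt_one _).le
  calc ‖x i‖ = |((⌊x i⌋ : ℤ) : ℝ) + Int.fract (x i)| := by rw [Real.norm_eq_abs, ← h2]
    _ ≤ |((⌊x i⌋ : ℤ) : ℝ)| + |Int.fract (x i)| := abs_add_le _ _
    _ ≤ ‖(fun i => ((⌊x i⌋ : ℤ) : ℝ) : Fin d → ℝ)‖ + 1 := by
        apply add_le_add _ h3
        simpa [Real.norm_eq_abs] using h1

/-- If `f ∈ W(L_∞, ℓ¹^{v_d})(ℝ^d)` then `f ∈ E_∞(ℝ^d)` with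
`‖f‖_{E_∞} ≤ C ‖f‖_{W(L_∞,ℓ¹^{v_d})}`. -/
theorem herzNorm_le_wienerAmalgamNorm (d : ℕ) :
    ∃ C : ℝ≥0∞, C < ∞ ∧ ∀ f : (Fin d → ℝ) → ℂ, wienerAmalgamNorm d f < ∞ →
      herzNorm d f ≤ C * wienerAmalgamNorm d f := by
  refine ⟨2, by norm_num, ?_⟩
  intro f _
  rcases Nat.eq_zero_or_pos d with hd0 | hd
  · -- d = 0 : the annuli are empty
    subst hd0
    have hempty : ∀ k : ℤ, herzAnnulus 0 k = ∅ := by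
      intro k
      ext x
      simp only [herzAnnulus, Set.mem_setOf_eq, Set.mem_empty_iff_false, iff_false, not_and]
      intro h
      exfalso
      have hx : x = 0 := Subsingleton.elim x 0
      rw [hx, norm_zero] at h
      have : (0:ℝ) < (2:ℝ) ^ (k-1) * π := by positivity
      linarith
    have : herzNorm 0 f = 0 := by
      unfold herzNorm
      simp [hempty]
    rw [this]
    exact zero_le
  · -- main case d ≥ 1
    set M : (Fin d → ℤ) → ℝ≥0∞ := fun n =>
      ⨆ x ∈ Set.pi Set.univ (fun _ : Fin d => Set.Ico (0 : ℝ) 1),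
        (‖f (x + fun i => (n i : ℝ))‖₊ : ℝ≥0∞) with hM
    set w : (Fin d → ℤ) → ℝ := fun n => 1 + ‖(fun i => (n i : ℝ) : Fin d → ℝ)‖ with hw
    have hw1 : ∀ n, 1 ≤ w n := by
      intro n; simp only [hw]; nlinarith [norm_nonneg ((fun i => (n i : ℝ) : Fin d → ℝ))]
    set T : ℤ → (Fin d → ℤ) → ℝ≥0∞ := fun k n =>
      if (2 : ℝ) ^ k ≤ w n then M n else 0 with hT
    -- Step 1: sup over the annulus is bounded by the sum over cubes touching it
    have step1 : ∀ k : ℤ, (⨆ x ∈ herzAnnulus d k, (‖f x‖₊ : ℝ≥0∞)) ≤ ∑' n, T k n := by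
      intro k
      refine iSup₂_le fun x hx => ?_
      set n : Fin d → ℤ := fun i => ⌊x i⌋ with hn
      have hcond : (2 : ℝ) ^ k ≤ w n := by
        have h1 : (2 : ℝ) ^ (k - 1) * π ≤ ‖x‖ := hx.1
        have h2 : ‖x‖ ≤ ‖(fun i => ((n i : ℤ) : ℝ) : Fin d → ℝ)‖ + 1 := herz_norm_le_floor d x
        have hpi : (2 : ℝ) ≤ π := by linarith [Real.pi_gt_three]
        have h3 : (2 : ℝ) ^ k = 2 * (2 : ℝ) ^ (k - 1) := by
          have h4 := zpow_add₀ (by norm_num : (2:ℝ) ≠ 0) (k - 1) 1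
          simp only [sub_add_cancel, zpow_one] at h4
          rw [h4]; ring
        have hz : (0:ℝ) < (2:ℝ) ^ (k-1) := by positivity
        calc (2 : ℝ) ^ k = 2 * (2 : ℝ) ^ (k - 1) := h3
          _ ≤ π * (2 : ℝ) ^ (k - 1) := by nlinarith
          _ = (2 : ℝ) ^ (k - 1) * π := by ring
          _ ≤ ‖x‖ := h1
          _ ≤ ‖(fun i => ((n i : ℤ) : ℝ) : Fin d → ℝ)‖ + 1 := h2
          _ = w n := by rw [hw]; ring
      have hfx : (‖f x‖₊ : ℝ≥0∞) ≤ M n := by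
        have hmem : (fun i => Int.fract (x i)) ∈
            Set.pi Set.univ (fun _ : Fin d => Set.Ico (0 : ℝ) 1) := by
          intro i _
          exact ⟨Int.fract_nonneg _, Int.fract_lt_one _⟩
        have hxeq : ((fun i => Int.fract (x i)) + fun i => ((n i : ℤ) : ℝ)) = x := by
          funext i
          simp only [Pi.add_apply, hn]
          exact Int.fract_add_floor (x i)
        have := le_iSup₂ (f := fun y (_ : y ∈ Set.pi Set.univ
            (fun _ : Fin d => Set.Ico (0 : ℝ) 1)) =>
            (‖f (y + fun i => ((n i : ℤ) : ℝ))‖₊ : ℝ≥0∞)) (fun i => Int.fract (x i)) hmem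
        rw [hxeq] at this
        exact this
      calc (‖f x‖₊ : ℝ≥0∞) ≤ T k n := by rw [hT]; simp only [if_pos hcond]; exact hfx
        _ ≤ ∑' n, T k n := ENNReal.le_tsum n
    -- Assemble
    calc herzNorm d f
        ≤ ∑' k : ℤ, (2 : ℝ≥0∞) ^ (k * (d : ℤ)) * ∑' n, T k n := by
          unfold herzNorm
          exact ENNReal.tsum_le_tsum fun k => mul_le_mul_right (step1 k) _
      _ = ∑' k : ℤ, ∑' n, (2 : ℝ≥0∞) ^ (k * (d : ℤ)) * T k n := by
          congr 1; funext k; rw [ENNReal.tsum_mul_left]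
      _ = ∑' n, ∑' k : ℤ, (2 : ℝ≥0∞) ^ (k * (d : ℤ)) * T k n := ENNReal.tsum_comm
      _ = ∑' n, (∑' k : ℤ, (if (2 : ℝ) ^ k ≤ w n then (2 : ℝ≥0∞) ^ (k * (d : ℤ)) else 0)) * M n := by
          refine tsum_congr fun n => ?_
          rw [← ENNReal.tsum_mul_right]
          refine tsum_congr fun k => ?_
          rw [hT]
          by_cases hc : (2 : ℝ) ^ k ≤ w n
          · simp [hc]
          · simp [hc]
      _ ≤ ∑' n, (2 * ENNReal.ofReal ((w n) ^ d)) * M n := by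
          refine ENNReal.tsum_le_tsum fun n => ?_
          exact mul_le_mul_left (herz_count_le d hd (w n) (hw1 n)) _
      _ = 2 * wienerAmalgamNorm d f := by
          unfold wienerAmalgamNorm
          rw [← ENNReal.tsum_mul_left]
          congr 1; funext n
          rw [hM, hw]
          ring
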